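/- The number of walks of length n in the quarter plane with step set {N, SE, W} = {(0,1), (1,-1), (-1,0)} starting at the origin equals the n-th Motzkin number, i.e. the counting generating function is W(t) = (1 - t - √((1+t)(1-3t)))/(2t²). -/

import Mathlib

open Finset

/-- The partial sum of the first `k` steps of a walk. -/
def psum {n : ℕ} (w : Fin n → ℤ × ℤ) (k : ℕ) : ℤ × ℤ :=
  ∑ i ∈ Finset.univ.filter (fun i : Fin n => (i : ℕ) < k), w i

/-- A quarter-plane walk: all steps lie in `Y` and every partial sum has
nonnegative coordinates. -/
def IsQWalk (Y : Finset (ℤ × ℤ)) {n : ℕ} (w : Fin n → ℤ × ℤ) : Prop :=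
  (∀ i, w i ∈ Y) ∧ ∀ k, 0 ≤ (psum w k).1 ∧ 0 ≤ (psum w k).2

/-- The number of quarter-plane walks of length `n` with steps from `Y`. -/
noncomputable def walkCount (Y : Finset (ℤ × ℤ)) (n : ℕ) : ℕ :=
  Nat.card {w : Fin n → ℤ × ℤ // IsQWalk Y w}

namespace MotzkinNSEW

set_option maxHeartbeats 1000000

abbrev Ystep : Finset (ℤ × ℤ) := {((0:ℤ),(1:ℤ)), (1,-1), (-1,0)}

/-! ### Basic `psum` lemmas -/

lemma psum_eq_sum_ite {n : ℕ} (w : Fin n → ℤ × ℤ) (k : ℕ) :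
    psum w k = ∑ i : Fin n, if (i : ℕ) < k then w i else 0 := by
  rw [psum, Finset.sum_filter]

lemma psum_zero {n : ℕ} (w : Fin n → ℤ × ℤ) : psum w 0 = 0 := by
  simp [psum_eq_sum_ite]

lemma psum_fin_zero (w : Fin 0 → ℤ × ℤ) (k : ℕ) : psum w k = 0 := by
  simp [psum]

lemma psum_saturate {n : ℕ} (w : Fin n → ℤ × ℤ) {k : ℕ} (hk : n ≤ k) :
    psum w k = psum w n := by
  simp only [psum_eq_sum_ite]
  refine Finset.sum_congr rfl fun i _ => ?_
  rw [if_pos (lt_of_lt_of_le i.isLt hk), if_pos i.isLt]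

lemma psum_castSucc {n : ℕ} (w : Fin (n+1) → ℤ × ℤ) {k : ℕ} (hk : k ≤ n) :
    psum (w ∘ Fin.castSucc) k = psum w k := by
  simp only [psum_eq_sum_ite]
  rw [Fin.sum_univ_castSucc (f := fun i : Fin (n+1) => if (i : ℕ) < k then w i else 0)]
  rw [if_neg (by simp only [Fin.val_last]; omega)]
  simp [Fin.coe_castSucc, Function.comp]

lemma psum_last {n : ℕ} (w : Fin (n+1) → ℤ × ℤ) :
    psum w (n+1) = psum w n + w (Fin.last n) := by
  simp only [psum_eq_sum_ite]
  rw [Fin.sum_univ_castSucc (f := fun i : Fin (n+1) => if (i : ℕ) < n+1 then w i else 0),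
      Fin.sum_univ_castSucc (f := fun i : Fin (n+1) => if (i : ℕ) < n then w i else 0)]
  simp [Fin.coe_castSucc, Fin.val_last, Nat.lt_succ_iff, Fin.is_le]

lemma psum_succ {n : ℕ} (w : Fin n → ℤ × ℤ) (k : ℕ) (hk : k < n) :
    psum w (k+1) = psum w k + w ⟨k, hk⟩ := by
  simp only [psum_eq_sum_ite]
  have key : ∀ i : Fin n, (if (i : ℕ) < k+1 then w i else 0)
      = (if (i : ℕ) < k then w i else 0) + (if (i : ℕ) = k then w i else 0) := by
    intro i
    rcases lt_trichotomy (i : ℕ) k with h|h|h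
    · rw [if_pos (by omega), if_pos h, if_neg (by omega), add_zero]
    · rw [if_pos (by omega), if_neg (by omega), if_pos h, zero_add]
    · rw [if_neg (by omega), if_neg (by omega), if_neg (by omega), add_zero]
  rw [Finset.sum_congr rfl (fun i _ => key i), Finset.sum_add_distrib]
  congr 1
  rw [Finset.sum_eq_single (⟨k, hk⟩ : Fin n)]
  · rw [if_pos rfl]
  · intro i _ hne
    exact if_neg (fun hik => hne (Fin.ext hik))
  · intro hmem; exact absurd (Finset.mem_univ _) hmem

lemma step_bounds {s : ℤ × ℤ} (hs : s ∈ Ystep) : s.1 ≤ 1 ∧ s.2 ≤ 1 := by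
  simp only [Ystep, Finset.mem_insert, Finset.mem_singleton] at hs
  rcases hs with h|h|h <;> subst h <;> norm_num

lemma psum_le {n : ℕ} {w : Fin n → ℤ × ℤ} (hw : ∀ i, w i ∈ Ystep) (k : ℕ) :
    (psum w k).1 ≤ k ∧ (psum w k).2 ≤ k := by
  induction k with
  | zero => simp [psum_zero]
  | succ k ih =>
    by_cases hk : k < n
    · rw [psum_succ w k hk]
      have hb := step_bounds (hw ⟨k, hk⟩)
      rw [Prod.fst_add, Prod.snd_add]
      push_cast
      omega
    · have h1 : psum w (k+1) = psum w n := psum_saturate w (by omega)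
      have h2 : psum w k = psum w n := psum_saturate w (by omega)
      rw [h1, ← h2]
      push_cast
      omega

/-! ### Finiteness -/

lemma finite_walks {n : ℕ} (P : (Fin n → ℤ × ℤ) → Prop)
    (hP : ∀ w, P w → ∀ i, w i ∈ Ystep) : Finite {w // P w} := by
  refine Finite.of_injective
    (fun w : {w // P w} => fun i => (⟨w.1 i, hP _ w.2 i⟩ : {x // x ∈ Ystep})) ?_
  intro a b h
  exact Subtype.ext (funext fun i => congrArg Subtype.val (congrFun h i))

instance instFin1 {n : ℕ} : Finite {w : Fin n → ℤ × ℤ // IsQWalk Ystep w} :=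
  finite_walks _ (fun _ hw => hw.1)

instance instFin2 {n : ℕ} {e : ℤ × ℤ} :
    Finite {w : Fin n → ℤ × ℤ // IsQWalk Ystep w ∧ psum w n = e} :=
  finite_walks _ (fun _ hw => hw.1.1)

lemma card_sigma' {ι : Type*} [Fintype ι] (f : ι → Type*) [∀ i, Finite (f i)] :
    Nat.card ((i : ι) × f i) = ∑ i, Nat.card (f i) := by
  letI : ∀ i, Fintype (f i) := fun i => Fintype.ofFinite _
  simp [Nat.card_eq_fintype_card]

/-! ### Refined walk counts -/

noncomputable def wc (n : ℕ) (e : ℤ × ℤ) : ℕ :=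
  Nat.card {w : Fin n → ℤ × ℤ // IsQWalk Ystep w ∧ psum w n = e}

lemma wc_zero (e : ℤ × ℤ) : wc 0 e = if e = 0 then 1 else 0 := by
  by_cases he : e = 0
  · subst he; rw [if_pos rfl, wc]
    have h1 : Nonempty {w : Fin 0 → ℤ × ℤ // IsQWalk Ystep w ∧ psum w 0 = 0} :=
      ⟨⟨fun i => i.elim0, ⟨fun i => i.elim0, fun k => by
        rw [psum_fin_zero]; exact ⟨le_refl 0, le_refl 0⟩⟩, psum_fin_zero _ _⟩⟩
    have h2 : Subsingleton {w : Fin 0 → ℤ × ℤ // IsQWalk Ystep w ∧ psum w 0 = 0} :=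
      ⟨fun a b => Subtype.ext (funext fun i => i.elim0)⟩
    exact Nat.card_unique
  · rw [if_neg he, wc]
    have : IsEmpty {w : Fin 0 → ℤ × ℤ // IsQWalk Ystep w ∧ psum w 0 = e} :=
      ⟨fun w => he (by rw [← w.2.2, psum_fin_zero])⟩
    exact Nat.card_of_isEmpty

lemma wc_eq_zero {n : ℕ} {e : ℤ × ℤ}
    (h : ¬ (0 ≤ e.1 ∧ 0 ≤ e.2 ∧ e.1 ≤ n ∧ e.2 ≤ n)) : wc n e = 0 := by
  have : IsEmpty {w : Fin n → ℤ × ℤ // IsQWalk Ystep w ∧ psum w n = e} := by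
    refine ⟨fun w => ?_⟩
    obtain ⟨hw, hend⟩ := w.2
    have hpos := hw.2 n
    have hle := psum_le hw.1 n
    rw [hend] at hpos hle
    exact h ⟨hpos.1, hpos.2, hle.1, hle.2⟩
  rw [wc]
  exact Nat.card_of_isEmpty

lemma isQWalk_castSucc {n : ℕ} {w : Fin (n+1) → ℤ × ℤ} (hw : IsQWalk Ystep w) :
    IsQWalk Ystep (w ∘ Fin.castSucc) := by
  refine ⟨fun i => hw.1 _, fun k => ?_⟩
  rcases le_or_gt k n with h|h
  · rw [psum_castSucc w h]; exact hw.2 k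
  · rw [psum_saturate _ (by omega : n ≤ k), psum_castSucc w le_rfl]; exact hw.2 n

lemma snoc_comp_castSucc {n : ℕ} (v : Fin n → ℤ × ℤ) (s : ℤ × ℤ) :
    (Fin.snoc v s : Fin (n+1) → ℤ × ℤ) ∘ Fin.castSucc = v := by
  funext i; simp

lemma psum_snoc {n : ℕ} (v : Fin n → ℤ × ℤ) (s : ℤ × ℤ) {k : ℕ} (hk : k ≤ n) :
    psum (Fin.snoc v s : Fin (n+1) → ℤ × ℤ) k = psum v k := by
  rw [← psum_castSucc (Fin.snoc v s) hk, snoc_comp_castSucc]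

lemma psum_snoc_top {n : ℕ} (v : Fin n → ℤ × ℤ) (s : ℤ × ℤ) :
    psum (Fin.snoc v s : Fin (n+1) → ℤ × ℤ) (n+1) = psum v n + s := by
  rw [psum_last, psum_snoc v s le_rfl, Fin.snoc_last]

lemma isQWalk_snoc {n : ℕ} {v : Fin n → ℤ × ℤ} {s : ℤ × ℤ} (hv : IsQWalk Ystep v)
    (hs : s ∈ Ystep) (hpos : 0 ≤ (psum v n + s).1 ∧ 0 ≤ (psum v n + s).2) :
    IsQWalk Ystep (Fin.snoc v s) := by
  constructor
  · intro i
    induction i using Fin.lastCases with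
    | last => rw [Fin.snoc_last]; exact hs
    | cast j => rw [Fin.snoc_castSucc]; exact hv.1 j
  · intro k
    rcases le_or_gt k n with h|h
    · rw [psum_snoc v s h]; exact hv.2 k
    · rw [psum_saturate _ (by omega : n+1 ≤ k), psum_snoc_top]
      exact hpos

lemma psum_castSucc_top {n : ℕ} (w : Fin (n+1) → ℤ × ℤ) :
    psum (w ∘ Fin.castSucc) n = psum w (n+1) - w (Fin.last n) := by
  rw [psum_castSucc w le_rfl, psum_last]
  abel

/-- The equivalence decomposing a walk of length `n+1` by its last step. -/
noncomputable def lastEquiv (n : ℕ) (e : ℤ × ℤ) (h1 : 0 ≤ e.1) (h2 : 0 ≤ e.2) :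
    {w : Fin (n+1) → ℤ × ℤ // IsQWalk Ystep w ∧ psum w (n+1) = e}
    ≃ (s : {x // x ∈ Ystep}) × {v : Fin n → ℤ × ℤ // IsQWalk Ystep v ∧ psum v n = e - s.1} where
  toFun w := ⟨⟨w.1 (Fin.last n), w.2.1.1 _⟩,
    ⟨w.1 ∘ Fin.castSucc, isQWalk_castSucc w.2.1, by
      rw [psum_castSucc_top]
      exact congrArg (fun z => z - w.1 (Fin.last n)) w.2.2⟩⟩
  invFun x := ⟨Fin.snoc x.2.1 x.1.1,
    ⟨isQWalk_snoc x.2.2.1 x.1.2 (by rw [x.2.2.2, sub_add_cancel]; exact ⟨h1, h2⟩),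
      by rw [psum_snoc_top, x.2.2.2, sub_add_cancel]⟩⟩
  left_inv w := Subtype.ext (funext fun i => by
    induction i using Fin.lastCases with
    | last => simp
    | cast j => simp)
  right_inv x := by
    rcases x with ⟨⟨s, hs⟩, ⟨v, hv, hp⟩⟩
    refine Sigma.ext (Subtype.ext (by simp)) ?_
    refine (Subtype.heq_iff_coe_eq ?_).mpr (by funext i; simp)
    intro w
    simp

lemma wc_succ (n : ℕ) (e : ℤ × ℤ) (h1 : 0 ≤ e.1) (h2 : 0 ≤ e.2) :
    wc (n+1) e = wc n (e - ((0:ℤ),(1:ℤ))) + wc n (e - ((1:ℤ),(-1:ℤ)))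
      + wc n (e - ((-1:ℤ),(0:ℤ))) := by
  classical
  have key : wc (n+1) e = ∑ s ∈ Ystep, wc n (e - s) := by
    rw [wc, Nat.card_congr (lastEquiv n e h1 h2), card_sigma']
    exact Finset.sum_coe_sort Ystep (fun s => wc n (e - s))
  rw [key]
  rw [show (Ystep : Finset (ℤ × ℤ))
      = insert ((0:ℤ),(1:ℤ)) (insert ((1:ℤ),(-1:ℤ)) {((-1:ℤ),(0:ℤ))}) from rfl]
  rw [Finset.sum_insert (by decide), Finset.sum_insert (by decide), Finset.sum_singleton]
  ring

/-! ### Sum over endpoints -/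

noncomputable def Ebox (n : ℕ) : Finset (ℤ × ℤ) := Finset.Icc 0 (n : ℤ) ×ˢ Finset.Icc 0 (n : ℤ)

lemma mem_Ebox {n : ℕ} {e : ℤ × ℤ} :
    e ∈ Ebox n ↔ 0 ≤ e.1 ∧ e.1 ≤ n ∧ 0 ≤ e.2 ∧ e.2 ≤ n := by
  simp [Ebox, Finset.mem_product, Finset.mem_Icc, and_assoc]

lemma endpoint_mem {n : ℕ} {w : Fin n → ℤ × ℤ} (hw : IsQWalk Ystep w) :
    psum w n ∈ Ebox n := by
  have h1 := hw.2 n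
  have h2 := psum_le hw.1 n
  exact mem_Ebox.mpr ⟨h1.1, h2.1, h1.2, h2.2⟩

noncomputable def endpointEquiv (n : ℕ) :
    {w : Fin n → ℤ × ℤ // IsQWalk Ystep w}
    ≃ (e : {x // x ∈ Ebox n}) × {w : Fin n → ℤ × ℤ // IsQWalk Ystep w ∧ psum w n = e.1} where
  toFun w := ⟨⟨psum w.1 n, endpoint_mem w.2⟩, ⟨w.1, w.2, rfl⟩⟩
  invFun x := ⟨x.2.1, x.2.2.1⟩
  left_inv w := rfl
  right_inv x := by
    rcases x with ⟨⟨e, he⟩, ⟨w, hw, hp⟩⟩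
    refine Sigma.ext (Subtype.ext hp) ?_
    refine (Subtype.heq_iff_coe_eq ?_).mpr rfl
    intro w'
    exact Iff.intro (fun hh => ⟨hh.1, hh.2.trans hp⟩) (fun hh => ⟨hh.1, hh.2.trans hp.symm⟩)

lemma walkCount_eq (n : ℕ) : walkCount Ystep n = ∑ e ∈ Ebox n, wc n e := by
  rw [walkCount, Nat.card_congr (endpointEquiv n), card_sigma']
  exact Finset.sum_coe_sort (Ebox n) (fun e => wc n e)

/-! ### The weight function and Motzkin ballot numbers -/

def lam (p q : ℤ) (h : ℕ) : ℕ := (min (h : ℤ) p - max 0 ((h : ℤ) - q) + 1).toNat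

def mz : ℕ → ℕ → ℕ
  | 0, h => if h = 0 then 1 else 0
  | n+1, 0 => mz n 0 + mz n 1
  | n+1, h+1 => mz n h + mz n (h+1) + mz n (h+2)

lemma lam_zero_right {p q : ℤ} (hp : 0 ≤ p) (hq : 0 ≤ q) : lam p q 0 = 1 := by
  simp only [lam]; omega

lemma lam_origin (h : ℕ) : lam 0 0 h = if h = 0 then 1 else 0 := by
  simp only [lam]; split_ifs <;> omega

lemma lam_neg_left {p : ℤ} (q : ℤ) (h : ℕ) (hp : p < 0) : lam p q h = 0 := by
  simp only [lam]; omega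

lemma lam_neg_right (p : ℤ) {q : ℤ} (h : ℕ) (hq : q < 0) : lam p q h = 0 := by
  simp only [lam]; omega

lemma lam_key0 {p q : ℤ} (hp : 0 ≤ p) (hq : 0 ≤ q) :
    lam (p+1) q 0 + lam (p-1) (q+1) 0 + lam p (q-1) 0 = lam p q 0 + lam p q 1 := by
  simp only [lam]; omega

lemma lam_keyS {p q : ℤ} (h : ℕ) (hp : 0 ≤ p) (hq : 0 ≤ q) :
    lam (p+1) q (h+1) + lam (p-1) (q+1) (h+1) + lam p (q-1) (h+1)
      = lam p q h + lam p q (h+1) + lam p q (h+2) := by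
  simp only [lam]; omega

/-! ### Shifted sums -/

lemma sum_shift (f : ℤ × ℤ → ℕ) (s : ℤ × ℤ) (A B : Finset (ℤ × ℤ))
    (hB : ∀ e ∈ B, f e ≠ 0 → e + s ∈ A)
    (hA : ∀ e ∈ A, f (e - s) ≠ 0 → e - s ∈ B) :
    ∑ e ∈ A, f (e - s) = ∑ e ∈ B, f e := by
  classical
  have hinj : Function.Injective (fun x : ℤ × ℤ => x - s) := fun a b hab => by
    simpa using congrArg (· + s) hab
  have h0 : (∑ e ∈ A, f (e - s)) = ∑ x ∈ A.map ⟨fun x => x - s, hinj⟩, f x :=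
    (Finset.sum_map A ⟨fun x => x - s, hinj⟩ f).symm
  rw [h0]
  calc ∑ x ∈ A.map ⟨fun x => x - s, hinj⟩, f x
      = ∑ x ∈ A.map ⟨fun x => x - s, hinj⟩ ∪ B, f x := by
        refine Finset.sum_subset Finset.subset_union_left ?_
        intro x hx hnx
        by_contra hfx
        have hxB : x ∈ B := by
          rcases Finset.mem_union.mp hx with h|h
          · exact absurd h hnx
          · exact h
        exact hnx (Finset.mem_map.mpr ⟨x + s, hB x hxB hfx, by simp⟩)
    _ = ∑ x ∈ B, f x := by
        refine (Finset.sum_subset Finset.subset_union_right ?_).symm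
        intro x hx hnx
        by_contra hfx
        have hxA : x ∈ A.map ⟨fun y => y - s, hinj⟩ := by
          rcases Finset.mem_union.mp hx with h|h
          · exact h
          · exact absurd h hnx
        rcases Finset.mem_map.mp hxA with ⟨e, heA, hex⟩
        simp only [Function.Embedding.coeFn_mk] at hex
        subst hex
        exact hnx (hA e heA hfx)

/-! ### The main identity -/

lemma wc_ne_zero_mem {n : ℕ} {e : ℤ × ℤ} (h : wc n e ≠ 0) : e ∈ Ebox n := by
  by_contra hmem
  exact h (wc_eq_zero (fun hh => hmem (mem_Ebox.mpr ⟨hh.1, hh.2.2.1, hh.2.1, hh.2.2.2⟩)))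

lemma main_identity (n : ℕ) :
    ∀ h : ℕ, ∑ e ∈ Ebox n, wc n e * lam e.2 e.1 h = mz n h := by
  induction n with
  | zero =>
    intro h
    have hE : Ebox 0 = {((0:ℤ),(0:ℤ))} := by
      ext e
      simp only [mem_Ebox, Finset.mem_singleton, Prod.ext_iff]
      constructor
      · rintro ⟨a, b, c, d⟩; constructor <;> omega
      · rintro ⟨a, b⟩; omega
    rw [hE, Finset.sum_singleton, wc_zero]
    rw [if_pos Prod.mk_zero_zero]
    show 1 * lam 0 0 h = mz 0 h
    rw [one_mul, lam_origin]
    rfl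
  | succ n ih =>
    intro h
    have step : ∀ e ∈ Ebox (n+1), wc (n+1) e * lam e.2 e.1 h
        = wc n (e - ((0:ℤ),(1:ℤ))) * lam e.2 e.1 h
          + wc n (e - ((1:ℤ),(-1:ℤ))) * lam e.2 e.1 h
          + wc n (e - ((-1:ℤ),(0:ℤ))) * lam e.2 e.1 h := by
      intro e he
      rcases mem_Ebox.mp he with ⟨h1, h2, h3, h4⟩
      rw [wc_succ n e h1 h3]
      ring
    rw [Finset.sum_congr rfl step, Finset.sum_add_distrib, Finset.sum_add_distrib]
    have hgen : ∀ s : ℤ × ℤ,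
        (∀ e' ∈ Ebox n, wc n e' * lam (e' + s).2 (e' + s).1 h ≠ 0 → e' + s ∈ Ebox (n+1)) →
        ∑ e ∈ Ebox (n+1), wc n (e - s) * lam e.2 e.1 h
          = ∑ e' ∈ Ebox n, wc n e' * lam (e' + s).2 (e' + s).1 h := by
      intro s hcond
      have h1 : ∑ e ∈ Ebox (n+1), wc n (e - s) * lam e.2 e.1 h
          = ∑ e ∈ Ebox (n+1),
              (fun e' => wc n e' * lam (e' + s).2 (e' + s).1 h) (e - s) :=
        Finset.sum_congr rfl (fun e _ => by simp only [sub_add_cancel])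
      rw [h1]
      exact sum_shift _ s _ _ hcond
        (fun e _ hne => wc_ne_zero_mem (fun h0 => hne (by simp [h0])))
    rw [hgen ((0:ℤ),(1:ℤ)) ?hN, hgen ((1:ℤ),(-1:ℤ)) ?hSE, hgen ((-1:ℤ),(0:ℤ)) ?hW]
    case hN =>
      intro e' he' _
      rcases mem_Ebox.mp he' with ⟨h1, h2, h3, h4⟩
      refine mem_Ebox.mpr ?_
      rw [Prod.fst_add, Prod.snd_add]
      show 0 ≤ e'.1 + 0 ∧ e'.1 + 0 ≤ ((n:ℤ)+1) ∧ 0 ≤ e'.2 + 1 ∧ e'.2 + 1 ≤ ((n:ℤ)+1)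
      push_cast
      omega
    case hSE =>
      intro e' he' hne
      rcases mem_Ebox.mp he' with ⟨h1, h2, h3, h4⟩
      have hlam : lam (e' + ((1:ℤ),(-1:ℤ))).2 (e' + ((1:ℤ),(-1:ℤ))).1 h ≠ 0 :=
        fun h0 => hne (by rw [h0, mul_zero])
      have hp : 0 ≤ (e' + ((1:ℤ),(-1:ℤ))).2 := by
        by_contra hc
        exact hlam (lam_neg_left _ _ (by omega))
      rw [Prod.snd_add] at hp
      refine mem_Ebox.mpr ?_
      rw [Prod.fst_add, Prod.snd_add]
      show 0 ≤ e'.1 + 1 ∧ e'.1 + 1 ≤ ((n:ℤ)+1) ∧ 0 ≤ e'.2 + (-1) ∧ e'.2 + (-1) ≤ ((n:ℤ)+1)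
      show 0 ≤ e'.1 + 1 ∧ e'.1 + 1 ≤ ((n:ℤ)+1) ∧ 0 ≤ e'.2 + (-1) ∧ e'.2 + (-1) ≤ ((n:ℤ)+1)
      have hp' : 0 ≤ e'.2 + (-1:ℤ) := hp
      push_cast
      push_cast at hp'
      omega
    case hW =>
      intro e' he' hne
      rcases mem_Ebox.mp he' with ⟨h1, h2, h3, h4⟩
      have hlam : lam (e' + ((-1:ℤ),(0:ℤ))).2 (e' + ((-1:ℤ),(0:ℤ))).1 h ≠ 0 :=
        fun h0 => hne (by rw [h0, mul_zero])
      have hq : 0 ≤ (e' + ((-1:ℤ),(0:ℤ))).1 := by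
        by_contra hc
        exact hlam (lam_neg_right _ _ (by omega))
      rw [Prod.fst_add] at hq
      refine mem_Ebox.mpr ?_
      rw [Prod.fst_add, Prod.snd_add]
      have hq' : 0 ≤ e'.1 + (-1:ℤ) := hq
      show 0 ≤ e'.1 + (-1) ∧ e'.1 + (-1) ≤ ((n:ℤ)+1) ∧ 0 ≤ e'.2 + 0 ∧ e'.2 + 0 ≤ ((n:ℤ)+1)
      push_cast
      push_cast at hq'
      omega
    · -- combine
      rw [← Finset.sum_add_distrib, ← Finset.sum_add_distrib]
      have comp : ∀ e : ℤ × ℤ,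
          (e + ((0:ℤ),(1:ℤ))).2 = e.2 + 1 ∧ (e + ((0:ℤ),(1:ℤ))).1 = e.1
          ∧ (e + ((1:ℤ),(-1:ℤ))).2 = e.2 - 1 ∧ (e + ((1:ℤ),(-1:ℤ))).1 = e.1 + 1
          ∧ (e + ((-1:ℤ),(0:ℤ))).2 = e.2 ∧ (e + ((-1:ℤ),(0:ℤ))).1 = e.1 - 1 := by
        intro e
        refine ⟨?_, ?_, ?_, ?_, ?_, ?_⟩ <;>
          simp only [Prod.fst_add, Prod.snd_add] <;> show _ = _ <;> ring
      cases h with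
      | zero =>
        have hpt : ∀ e ∈ Ebox n,
            wc n e * lam (e + ((0:ℤ),(1:ℤ))).2 (e + ((0:ℤ),(1:ℤ))).1 0
              + wc n e * lam (e + ((1:ℤ),(-1:ℤ))).2 (e + ((1:ℤ),(-1:ℤ))).1 0
              + wc n e * lam (e + ((-1:ℤ),(0:ℤ))).2 (e + ((-1:ℤ),(0:ℤ))).1 0
            = wc n e * lam e.2 e.1 0 + wc n e * lam e.2 e.1 1 := by
          intro e he
          rcases mem_Ebox.mp he with ⟨h1, h2, h3, h4⟩
          obtain ⟨c1, c2, c3, c4, c5, c6⟩ := comp e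
          rw [c1, c2, c3, c4, c5, c6, ← mul_add, ← mul_add, ← mul_add,
            lam_key0 h3 h1]
        rw [Finset.sum_congr rfl hpt, Finset.sum_add_distrib, ih 0, ih 1]
        rfl
      | succ h =>
        have hpt : ∀ e ∈ Ebox n,
            wc n e * lam (e + ((0:ℤ),(1:ℤ))).2 (e + ((0:ℤ),(1:ℤ))).1 (h+1)
              + wc n e * lam (e + ((1:ℤ),(-1:ℤ))).2 (e + ((1:ℤ),(-1:ℤ))).1 (h+1)
              + wc n e * lam (e + ((-1:ℤ),(0:ℤ))).2 (e + ((-1:ℤ),(0:ℤ))).1 (h+1)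
            = wc n e * lam e.2 e.1 h + wc n e * lam e.2 e.1 (h+1)
              + wc n e * lam e.2 e.1 (h+2) := by
          intro e he
          rcases mem_Ebox.mp he with ⟨h1, h2, h3, h4⟩
          obtain ⟨c1, c2, c3, c4, c5, c6⟩ := comp e
          rw [c1, c2, c3, c4, c5, c6, ← mul_add, ← mul_add, ← mul_add, ← mul_add,
            lam_keyS h h3 h1]
        rw [Finset.sum_congr rfl hpt, Finset.sum_add_distrib, Finset.sum_add_distrib,
          ih h, ih (h+1), ih (h+2)]
        rfl

/-! ### Power series part -/

open PowerSeries in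
noncomputable def Fser (M : ℕ → ℕ) : PowerSeries ℚ := PowerSeries.mk fun n => (M n : ℚ)

open PowerSeries in
lemma Fser_eq (M : ℕ → ℕ) (hM0 : M 0 = 1)
    (hMrec : ∀ n, M (n + 1) = M n + ∑ k ∈ Finset.range n, M k * M (n - 1 - k)) :
    Fser M = 1 + X * Fser M + X ^ 2 * (Fser M) ^ 2 := by
  ext n
  rw [map_add, map_add]
  cases n with
  | zero =>
    simp [Fser, hM0, PowerSeries.coeff_zero_eq_constantCoeff, map_mul, map_pow]
  | succ n =>
    rw [PowerSeries.coeff_succ_X_mul]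
    cases n with
    | zero =>
      have h1 : (PowerSeries.coeff 1) (X ^ 2 * (Fser M) ^ 2) = 0 := by
        rw [pow_two, mul_assoc, PowerSeries.coeff_succ_X_mul]
        exact PowerSeries.coeff_zero_X_mul _
      rw [h1, PowerSeries.coeff_one]
      simp [Fser, hMrec 0, hM0]
    | succ n =>
      have h2 : (PowerSeries.coeff (n + 1 + 1)) (X ^ 2 * (Fser M) ^ 2)
          = PowerSeries.coeff n ((Fser M) ^ 2) := by
        have h3 := PowerSeries.coeff_X_pow_mul ((Fser M) ^ 2) 2 n
        convert h3 using 2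
      rw [h2, PowerSeries.coeff_one, pow_two, PowerSeries.coeff_mul,
        Finset.Nat.sum_antidiagonal_eq_sum_range_succ_mk]
      simp only [Fser, PowerSeries.coeff_mk]
      rw [if_neg (by omega : ¬ (n + 1 + 1 = 0)), hMrec (n+1)]
      simp only [Nat.add_sub_cancel]
      push_cast
      ring

open PowerSeries in
lemma mz_coeff (M : ℕ → ℕ) (hM0 : M 0 = 1)
    (hMrec : ∀ n, M (n + 1) = M n + ∑ k ∈ Finset.range n, M k * M (n - 1 - k)) :
    ∀ n h : ℕ, (mz n h : ℚ) = PowerSeries.coeff n (X ^ h * (Fser M) ^ (h + 1)) := by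
  intro n
  induction n with
  | zero =>
    intro h
    cases h with
    | zero => simp [mz, Fser, hM0]
    | succ h =>
      simp [mz, PowerSeries.coeff_zero_eq_constantCoeff, map_mul, map_pow]
  | succ n ih =>
    intro h
    cases h with
    | zero =>
      have kk : Fser M = 1 + X * (X ^ 0 * (Fser M) ^ (0+1) + X ^ 1 * (Fser M) ^ (1+1)) := by
        calc Fser M = 1 + X * Fser M + X ^ 2 * (Fser M) ^ 2 := Fser_eq M hM0 hMrec
          _ = 1 + X * (X ^ 0 * (Fser M) ^ (0+1) + X ^ 1 * (Fser M) ^ (1+1)) := by ring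
      rw [show (0:ℕ)+1 = 1 from rfl, pow_zero, one_mul, pow_one, kk]
      rw [map_add, PowerSeries.coeff_one, if_neg (Nat.succ_ne_zero n),
        PowerSeries.coeff_succ_X_mul, map_add, ← ih 0, ← ih 1]
      rw [show mz (n+1) 0 = mz n 0 + mz n 1 from rfl]
      push_cast
      ring
    | succ h =>
      have key : X ^ (h+1) * (Fser M) ^ (h+1+1)
          = X * (X ^ h * (Fser M) ^ (h+1) + X ^ (h+1) * (Fser M) ^ (h+1+1)
              + X ^ (h+2) * (Fser M) ^ (h+2+1)) := by
        calc X ^ (h+1) * (Fser M) ^ (h+1+1)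
            = (X ^ (h+1) * (Fser M) ^ (h+1)) * (1 + X * Fser M + X ^ 2 * (Fser M) ^ 2) := by
              rw [← Fser_eq M hM0 hMrec]; ring
          _ = _ := by ring
      rw [key, PowerSeries.coeff_succ_X_mul, map_add, map_add, ← ih h, ← ih (h+1), ← ih (h+2)]
      rw [show mz (n+1) (h+1) = mz n h + mz n (h+1) + mz n (h+2) from rfl]
      push_cast
      ring

lemma part1 (M : ℕ → ℕ) (hM0 : M 0 = 1)
    (hMrec : ∀ n, M (n + 1) = M n + ∑ k ∈ Finset.range n, M k * M (n - 1 - k)) :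
    ∀ n, walkCount Ystep n = M n := by
  intro n
  have l2 : ∑ e ∈ Ebox n, wc n e = ∑ e ∈ Ebox n, wc n e * lam e.2 e.1 0 :=
    Finset.sum_congr rfl (fun e he => by
      rcases mem_Ebox.mp he with ⟨a, b, c, d⟩
      rw [lam_zero_right c a, mul_one])
  have l4 : (mz n 0 : ℚ) = (M n : ℚ) := by
    rw [mz_coeff M hM0 hMrec n 0]
    simp [Fser]
  have l5 : mz n 0 = M n := Nat.cast_injective l4
  rw [walkCount_eq, l2, main_identity n 0, l5]

open PowerSeries in
lemma part2 (M : ℕ → ℕ) (hM0 : M 0 = 1)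
    (hMrec : ∀ n, M (n + 1) = M n + ∑ k ∈ Finset.range n, M k * M (n - 1 - k))
    (s : PowerSeries ℚ)
    (hs2 : s ^ 2 = (1 + X) * (1 - 3 * X)) (hs1 : constantCoeff s = 1) :
    2 * X ^ 2 * (PowerSeries.mk fun n => (walkCount Ystep n : ℚ)) = 1 - X - s := by
  have hW : (PowerSeries.mk fun n => (walkCount Ystep n : ℚ)) = Fser M := by
    ext n
    simp [Fser, PowerSeries.coeff_mk, part1 M hM0 hMrec n]
  rw [hW]
  have hFeq := Fser_eq M hM0 hMrec
  have hz : 1 + X * Fser M + X ^ 2 * (Fser M) ^ 2 - Fser M = 0 := by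
    rw [← hFeq]; exact sub_self (Fser M)
  have hG2 : (1 - X - 2 * X ^ 2 * Fser M) ^ 2 = (1 + X) * (1 - 3 * X) := by
    have h0 : (1 - X - 2 * X ^ 2 * Fser M) ^ 2
        = (1 + X) * (1 - 3 * X)
          + (4 * X ^ 2) * (1 + X * Fser M + X ^ 2 * (Fser M) ^ 2 - Fser M) := by ring
    rw [h0, hz, mul_zero, add_zero]
  have hfactor : (s - (1 - X - 2 * X ^ 2 * Fser M)) * (s + (1 - X - 2 * X ^ 2 * Fser M)) = 0 := by
    have h1 : (s - (1 - X - 2 * X ^ 2 * Fser M)) * (s + (1 - X - 2 * X ^ 2 * Fser M))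
        = s ^ 2 - (1 - X - 2 * X ^ 2 * Fser M) ^ 2 := by ring
    rw [h1, hs2, hG2, sub_self]
  rcases mul_eq_zero.mp hfactor with h|h
  · have hse : s = 1 - X - 2 * X ^ 2 * Fser M := sub_eq_zero.mp h
    rw [hse]
    ring
  · exfalso
    have hc : constantCoeff (s + (1 - X - 2 * X ^ 2 * Fser M)) = 0 := by
      rw [h]; simp
    rw [map_add, hs1] at hc
    have hone : constantCoeff (1 - X - 2 * X ^ 2 * Fser M) = 1 := by
      simp [map_sub, map_mul, map_pow]
    rw [hone] at hc
    norm_num at hc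

end MotzkinNSEW

theorem motzkin_count_NSEW
    (M : ℕ → ℕ) (hM0 : M 0 = 1)
    (hMrec : ∀ n, M (n + 1) = M n + ∑ k ∈ Finset.range n, M k * M (n - 1 - k)) :
    (∀ n, walkCount {((0:ℤ),(1:ℤ)), (1,-1), (-1,0)} n = M n) ∧
    (∀ s : PowerSeries ℚ,
      s ^ 2 = (1 + PowerSeries.X) * (1 - 3 * PowerSeries.X) →
      PowerSeries.constantCoeff s = 1 →
      2 * PowerSeries.X ^ 2 *
          (PowerSeries.mk fun n => (walkCount {((0:ℤ),(1:ℤ)), (1,-1), (-1,0)} n : ℚ)) =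
        1 - PowerSeries.X - s) := by
  exact ⟨MotzkinNSEW.part1 M hM0 hMrec,
    fun s hs2 hs1 => MotzkinNSEW.part2 M hM0 hMrec s hs2 hs1⟩
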